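/- Let T be a rooted directed tree of depth h with all leaves at depth h, where each internal vertex v computes a fixed transfer function τ_v of its children, and the root's output f_{h,r} is a Boolean function of the leaf values. Suppose each τ_v has all truth-table entries chosen independently (full independence). For a leaf ℓ with root path v_0 = ℓ, v_1, ..., v_h = r, E_T[Inf_ℓ(f_{h,r})] = prod_{i=1}^{h} E[Inf_{v_{i-1}}(τ_{v_i})], where the expectation is over the random choice of transfer functions. -/

import Mathlib

/-- Rooted directed trees in which all leaves are at depth `h`. -/
inductive BTree : ℕ → Type where
  | leaf : BTree 0
  | node : {h : ℕ} → (d : ℕ) → (Fin d → BTree h) → BTree (h + 1)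

/-- The (index type of the) leaves of a tree. -/
def BTree.Leaves : {h : ℕ} → BTree h → Type
  | _, .leaf => Unit
  | _, .node d c => Σ i : Fin d, (c i).Leaves

def BTree.leavesFintype : {h : ℕ} → (t : BTree h) → Fintype t.Leaves
  | _, .leaf => inferInstanceAs (Fintype Unit)
  | _, .node d c =>
      letI := fun i => (c i).leavesFintype
      inferInstanceAs (Fintype (Σ i : Fin d, (c i).Leaves))

instance instLeavesFintype {h : ℕ} (t : BTree h) : Fintype t.Leaves := t.leavesFintype

def BTree.leavesDecEq : {h : ℕ} → (t : BTree h) → DecidableEq t.Leaves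
  | _, .leaf => inferInstanceAs (DecidableEq Unit)
  | _, .node d c =>
      letI := fun i => (c i).leavesDecEq
      inferInstanceAs (DecidableEq (Σ i : Fin d, (c i).Leaves))

instance instLeavesDecEq {h : ℕ} (t : BTree h) : DecidableEq t.Leaves := t.leavesDecEq

/-- An assignment of a transfer function to every internal vertex of the tree:
a vertex with `d` children gets a function `(Fin d → Bool) → Bool` of its children. -/
def BTree.Labels : {h : ℕ} → BTree h → Type
  | _, .leaf => Unit
  | _, .node d c => ((Fin d → Bool) → Bool) × (∀ i : Fin d, (c i).Labels)

/-- The Boolean function computed at the root: each internal vertex applies its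
transfer function to the values of its children; leaves take the input values. -/
def BTree.eval : {h : ℕ} → (t : BTree h) → t.Labels → (t.Leaves → Bool) → Bool
  | _, .leaf, _, x => x ()
  | _, .node d c, L, x =>
      L.1 fun i => (c i).eval (L.2 i) fun ℓ => x ⟨i, ℓ⟩

/-- The influence of coordinate `i` on `f`: `Pr_x[f(x) ≠ f(x^{(i)})]`, `x` uniform. -/
noncomputable def infl {ι : Type*} [Fintype ι] [DecidableEq ι]
    (f : (ι → Bool) → Bool) (i : ι) : ℝ :=
  ((Finset.univ.filter fun x : ι → Bool => f x ≠ f (Function.update x i (!(x i)))).card : ℝ) /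
    2 ^ (Fintype.card ι)

/-- Expectation of a real random variable under a `PMF`. -/
noncomputable def pexp {α : Type*} (p : PMF α) (X : α → ℝ) : ℝ :=
  ∑' a, (p a).toReal * X a

/-- Product of `PMF`s over `Fin d` (independent coordinates). -/
noncomputable def pmfPi : {d : ℕ} → {α : Fin d → Type} → (∀ i, PMF (α i)) → PMF (∀ i, α i)
  | 0, _, _ => PMF.pure (fun i => i.elim0)
  | _ + 1, _, p =>
      (p 0).bind fun a => (pmfPi fun i => p i.succ).map fun g => Fin.cons a g

/-- Independently draw the transfer function of each internal vertex, the function of a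
`d`-ary vertex being drawn from `T d`. -/
noncomputable def labelPMF (T : ∀ d, PMF ((Fin d → Bool) → Bool)) :
    {h : ℕ} → (t : BTree h) → PMF t.Labels
  | _, .leaf => PMF.pure ()
  | _, .node d c =>
      (T d).bind fun f => (pmfPi fun i => labelPMF T (c i)).map fun Ls => (f, Ls)

/-- `pathProd T t ℓ` is `∏_{k=1}^{h} E[infl_{v_{k-1}}(τ_{v_k})]`, the product of the
expected influences along the path `v_0 = ℓ, v_1, …, v_h = root` from the leaf `ℓ`
to the root. -/
noncomputable def pathProd (T : ∀ d, PMF ((Fin d → Bool) → Bool)) :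
    {h : ℕ} → (t : BTree h) → t.Leaves → ℝ
  | _, .leaf, _ => 1
  | _, .node d c, ℓ => pexp (T d) (fun f => infl f ℓ.1) * pathProd T (c ℓ.1) ℓ.2

/-- A fully independent family of transfer functions: every truth-table entry is drawn
i.i.d. from the distribution `μ` on bits. -/
noncomputable def iidFun (μ : PMF Bool) (d : ℕ) : PMF ((Fin d → Bool) → Bool) :=
  (pmfPi fun _ : Fin (Fintype.card (Fin d → Bool)) => μ).map
    fun g x => g (Fintype.equivFin (Fin d → Bool) x)

lemma pmfPi_apply : ∀ {d : ℕ} {α : Fin d → Type} [∀ i, Fintype (α i)] [∀ i, DecidableEq (α i)]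
    (p : ∀ i, PMF (α i)) (g : ∀ i, α i), pmfPi p g = ∏ i, p i (g i)
  | 0, α, _, _, p, g => by
      rw [pmfPi]
      have : g = fun i => i.elim0 := funext fun i => i.elim0
      simp [this, PMF.pure_apply]
  | d + 1, α, _, _, p, g => by
      rw [pmfPi]
      rw [PMF.bind_apply]
      classical
      have hmap : ∀ a : α 0, ((pmfPi fun i => p i.succ).map fun h => Fin.cons a h) g
          = if g 0 = a then (pmfPi fun i => p i.succ) (Fin.tail g) else 0 := by
        intro a
        rw [PMF.map_apply]
        by_cases h : g 0 = a
        · rw [if_pos h]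
          rw [tsum_eq_single (Fin.tail g)]
          · rw [if_pos (by rw [← h, Fin.cons_self_tail])]
          · intro b hb
            rw [if_neg]
            intro hg
            apply hb
            rw [hg, Fin.tail_cons]
        · rw [if_neg h]
          apply ENNReal.tsum_eq_zero.2
          intro b
          rw [if_neg]
          intro hg
          apply h
          rw [hg, Fin.cons_zero]
      simp_rw [hmap]
      rw [tsum_eq_single (g 0)]
      · rw [if_pos rfl, pmfPi_apply (fun i => p i.succ) (Fin.tail g), Fin.prod_univ_succ]
        rfl
      · intro b hb; rw [if_neg (fun h => hb h.symm), mul_zero]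

lemma pexp_fintype {α : Type*} [Fintype α] (p : PMF α) (X : α → ℝ) :
    pexp p X = ∑ a, (p a).toReal * X a := tsum_fintype _

lemma pmf_sum_toReal_eq_one {α : Type*} [Fintype α] (p : PMF α) :
    ∑ a, (p a).toReal = 1 := by
  have h := p.tsum_coe
  rw [tsum_fintype] at h
  rw [← ENNReal.toReal_sum (fun a _ => (p.apply_ne_top a)), h, ENNReal.toReal_one]

lemma iidFun_apply (μ : PMF Bool) (d : ℕ) (f : (Fin d → Bool) → Bool) :
    iidFun μ d f = ∏ x : Fin d → Bool, μ (f x) := by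
  classical
  rw [iidFun, PMF.map_apply]
  set e := Fintype.equivFin (Fin d → Bool)
  rw [tsum_eq_single (fun j => f (e.symm j))]
  · rw [if_pos (by funext x; simp), pmfPi_apply]
    exact Fintype.prod_equiv e.symm (fun j => μ (f (e.symm j))) (fun x => μ (f x))
      (fun j => rfl)
  · intro g hg
    rw [if_neg]
    intro h
    apply hg
    funext j
    have := congrFun h (e.symm j)
    simpa using this.symm

def BTree.labelsFintype : {h : ℕ} → (t : BTree h) → Fintype t.Labels
  | _, .leaf => inferInstanceAs (Fintype Unit)
  | _, .node d c =>
      letI := fun i => (c i).labelsFintype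
      inferInstanceAs (Fintype (((Fin d → Bool) → Bool) × (∀ i : Fin d, (c i).Labels)))

instance instLabelsFintype {h : ℕ} (t : BTree h) : Fintype t.Labels := t.labelsFintype

def BTree.labelsDecEq : {h : ℕ} → (t : BTree h) → DecidableEq t.Labels
  | _, .leaf => inferInstanceAs (DecidableEq Unit)
  | _, .node d c =>
      letI := fun i => (c i).labelsDecEq
      inferInstanceAs (DecidableEq (((Fin d → Bool) → Bool) × (∀ i : Fin d, (c i).Labels)))

instance instLabelsDecEq {h : ℕ} (t : BTree h) : DecidableEq t.Labels := t.labelsDecEq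

lemma labelPMF_node_apply (T : ∀ d, PMF ((Fin d → Bool) → Bool)) {h : ℕ} (d : ℕ)
    (c : Fin d → BTree h) (f : (Fin d → Bool) → Bool) (Ls : ∀ i, (c i).Labels) :
    labelPMF T (.node d c) (f, Ls) = T d f * ∏ i, labelPMF T (c i) (Ls i) := by
  classical
  rw [labelPMF]
  erw [PMF.bind_apply]
  have hmap : ∀ g : (Fin d → Bool) → Bool,
      T d g * ((pmfPi fun i => labelPMF T (c i)).map fun L => (g, L)) (f, Ls)
        = T d g * if g = f then (pmfPi fun i => labelPMF T (c i)) Ls else 0 := by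
    intro g
    congr 1
    rw [PMF.map_apply]
    by_cases h : g = f
    · subst h
      rw [if_pos rfl, tsum_eq_single Ls]
      · rw [if_pos rfl]
      · intro L hL
        rw [if_neg (fun hh => hL (congrArg Prod.snd hh).symm)]
    · rw [if_neg h]
      apply ENNReal.tsum_eq_zero.2
      intro L
      rw [if_neg (fun hh => h (congrArg Prod.fst hh).symm)]
  show (∑' g : (Fin d → Bool) → Bool,
      T d g * ((pmfPi fun i => labelPMF T (c i)).map fun L => (g, L)) (f, Ls)) = _
  rw [tsum_congr hmap, tsum_eq_single f]
  · rw [if_pos rfl, pmfPi_apply]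
  · intro g hg; rw [if_neg hg, mul_zero]

lemma infl_eq_sum {ι : Type*} [Fintype ι] [DecidableEq ι]
    (f : (ι → Bool) → Bool) (i : ι) :
    infl f i = (∑ x : ι → Bool,
        if f x ≠ f (Function.update x i (!(x i))) then (1:ℝ) else 0) / 2 ^ (Fintype.card ι) := by
  rw [infl]
  congr 1
  rw [Finset.card_filter]
  push_cast
  rfl

lemma prod_pair_one {ι : Type*} [Fintype ι] [DecidableEq ι] (g : ι → ℝ) (a b : ι)
    (hab : a ≠ b) (h : ∀ x, x ≠ a → x ≠ b → g x = 1) : ∏ x, g x = g a * g b := by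
  rw [← Finset.prod_pair hab]
  exact (Finset.prod_subset (Finset.subset_univ _) (fun x _ hx => by
    simp only [Finset.mem_insert, Finset.mem_singleton, not_or] at hx
    exact h x hx.1 hx.2)).symm

lemma sum_prod_ne (q : Bool → ℝ) (hq : q false + q true = 1) {ι : Type*} [Fintype ι]
    [DecidableEq ι] (a b : ι) (hab : a ≠ b) :
    ∑ f : ι → Bool, (∏ x, q (f x)) * (if f a ≠ f b then (1:ℝ) else 0)
      = 2 * q false * q true := by
  classical
  have key : ∀ s u : Bool, s ≠ u →
      ∑ f : ι → Bool, (∏ x, q (f x)) *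
        ((if f a = s then (1:ℝ) else 0) * (if f b = u then (1:ℝ) else 0)) = q s * q u := by
    intro s u _
    have hh : ∀ f : ι → Bool, (∏ x, q (f x)) *
        ((if f a = s then (1:ℝ) else 0) * (if f b = u then (1:ℝ) else 0))
        = ∏ x, (fun x bb => q bb * (if x = a then (if bb = s then (1:ℝ) else 0)
            else if x = b then (if bb = u then (1:ℝ) else 0) else 1)) x (f x) := by
      intro f
      rw [Finset.prod_mul_distrib]
      congr 1
      rw [prod_pair_one _ a b hab (fun x hxa hxb => by simp [hxa, hxb])]
      simp [if_neg (Ne.symm hab)]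
    rw [Finset.sum_congr rfl (fun f _ => hh f),
      ← Fintype.prod_sum (fun x bb => q bb * (if x = a then (if bb = s then (1:ℝ) else 0)
            else if x = b then (if bb = u then (1:ℝ) else 0) else 1))]
    rw [prod_pair_one _ a b hab (fun x hxa hxb => by
      simp [hxa, hxb]
      linarith [hq])]
    simp only [if_pos rfl, if_neg (Ne.symm hab), eq_self_iff_true, if_true]
    have ha : (∑ bb : Bool, q bb * ((if bb = s then (1:ℝ) else 0))) = q s := by
      cases s <;> simp
    have hb : (∑ bb : Bool, q bb * ((if bb = u then (1:ℝ) else 0))) = q u := by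
      cases u <;> simp
    rw [ha, hb]
  have split : ∀ f : ι → Bool, (if f a ≠ f b then (1:ℝ) else 0)
      = ((if f a = true then (1:ℝ) else 0) * (if f b = false then (1:ℝ) else 0))
        + ((if f a = false then (1:ℝ) else 0) * (if f b = true then (1:ℝ) else 0)) := by
    intro f
    cases hfa : f a <;> cases hfb : f b <;> simp
  calc ∑ f : ι → Bool, (∏ x, q (f x)) * (if f a ≠ f b then (1:ℝ) else 0)
      = (∑ f : ι → Bool, (∏ x, q (f x)) *
            ((if f a = true then (1:ℝ) else 0) * (if f b = false then (1:ℝ) else 0)))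
        + (∑ f : ι → Bool, (∏ x, q (f x)) *
            ((if f a = false then (1:ℝ) else 0) * (if f b = true then (1:ℝ) else 0))) := by
        rw [← Finset.sum_add_distrib]
        exact Finset.sum_congr rfl fun f _ => by rw [split f, mul_add]
    _ = q true * q false + q false * q true := by
        rw [key true false (by simp), key false true (by simp)]
    _ = 2 * q false * q true := by ring

lemma update_ne_self {κ : Type*} [DecidableEq κ] (x : κ → Bool) (j : κ) :
    x ≠ Function.update x j (!(x j)) := by
  intro h
  have := congrFun h j
  rw [Function.update_self] at this
  exact (Bool.self_ne_not (x j)) this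

lemma pmf_bool_sum (μ : PMF Bool) : (μ false).toReal + (μ true).toReal = 1 := by
  have := pmf_sum_toReal_eq_one μ
  rw [Fintype.sum_bool] at this
  linarith

lemma iid_twoPoint (μ : PMF Bool) (d : ℕ) (a b : Fin d → Bool) (hab : a ≠ b) :
    ∑ f : (Fin d → Bool) → Bool, (iidFun μ d f).toReal * (if f a ≠ f b then (1:ℝ) else 0)
      = 2 * (μ false).toReal * (μ true).toReal := by
  have h1 : ∀ f : (Fin d → Bool) → Bool,
      (iidFun μ d f).toReal = ∏ x : Fin d → Bool, (μ (f x)).toReal := by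
    intro f; rw [iidFun_apply, ENNReal.toReal_prod]
  rw [Finset.sum_congr rfl fun f _ => by rw [h1 f]]
  exact sum_prod_ne (fun b => (μ b).toReal) (pmf_bool_sum μ) a b hab

lemma pexp_iid_infl (μ : PMF Bool) (d : ℕ) (i : Fin d) :
    pexp (iidFun μ d) (fun f => infl f i) = 2 * (μ false).toReal * (μ true).toReal := by
  classical
  rw [pexp_fintype]
  have h1 : ∀ f : (Fin d → Bool) → Bool, (iidFun μ d f).toReal * infl f i
      = ∑ x : Fin d → Bool, ((iidFun μ d f).toReal *
          (if f x ≠ f (Function.update x i (!(x i))) then (1:ℝ) else 0)) / 2 ^ d := by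
    intro f
    rw [infl_eq_sum, Fintype.card_fin, ← Finset.sum_div, ← Finset.mul_sum, mul_div_assoc]
  rw [Finset.sum_congr rfl fun f _ => h1 f, Finset.sum_comm]
  have h2 : ∀ x : Fin d → Bool,
      ∑ f : (Fin d → Bool) → Bool, ((iidFun μ d f).toReal *
          (if f x ≠ f (Function.update x i (!(x i))) then (1:ℝ) else 0)) / 2 ^ d
        = (2 * (μ false).toReal * (μ true).toReal) / 2 ^ d := by
    intro x
    rw [← Finset.sum_div, iid_twoPoint μ d x _ (update_ne_self x i)]
  rw [Finset.sum_congr rfl fun x _ => h2 x, Finset.sum_const, Finset.card_univ]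
  have hc : Fintype.card (Fin d → Bool) = 2 ^ d := by
    simp [Fintype.card_fun]
  rw [hc, nsmul_eq_mul]
  have : (2:ℝ) ^ d ≠ 0 := by positivity
  push_cast
  field_simp

lemma FUB {ι : Type*} [Fintype ι] [DecidableEq ι] {β : ι → Type*} [∀ j, Fintype (β j)]
    (p : ∀ j, β j → ℝ) (i : ι) (X : β i → ℝ) :
    ∑ f : ∀ j, β j, (∏ j, p j (f j)) * X (f i)
      = (∑ b, p i b * X b) * ∏ j ∈ Finset.univ.erase i, (∑ b, p j b) := by
  classical
  set H : ∀ j, β j → ℝ := fun j b => p j b * (if h : j = i then X (h ▸ b) else 1) with hH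
  have step1 : ∀ f : ∀ j, β j, (∏ j, p j (f j)) * X (f i) = ∏ j, H j (f j) := by
    intro f
    rw [hH]
    simp only []
    rw [Finset.prod_mul_distrib]
    congr 1
    rw [Fintype.prod_eq_single i (fun j hj => dif_neg hj), dif_pos rfl]
  rw [Finset.sum_congr rfl fun f _ => step1 f, ← Fintype.prod_sum H,
    ← Finset.mul_prod_erase _ _ (Finset.mem_univ i)]
  congr 1
  · exact Finset.sum_congr rfl fun b _ => by rw [hH]; simp
  · refine Finset.prod_congr rfl fun j hj => Finset.sum_congr rfl fun b _ => ?_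
    rw [hH]
    simp only [dif_neg (Finset.mem_erase.1 hj).1, mul_one]

lemma FUBcount {ι : Type*} [Fintype ι] [DecidableEq ι] {β : ι → Type*} [∀ j, Fintype (β j)]
    (i : ι) (X : β i → ℝ) :
    ∑ f : ∀ j, β j, X (f i)
      = (∑ b, X b) * ∏ j ∈ Finset.univ.erase i, (Fintype.card (β j) : ℝ) := by
  have := FUB (fun j (_ : β j) => (1:ℝ)) i X
  simpa using this

section Node

variable {h : ℕ} {d : ℕ} (c : Fin d → BTree h) (Ls : ∀ j, (c j).Labels)
  (i : Fin d) (ℓ' : (c i).Leaves)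

/-- values of the children -/
def Yval (x : (BTree.node d c).Leaves → Bool) : Fin d → Bool :=
  fun j => (c j).eval (Ls j) (fun m => x ⟨j, m⟩)

lemma evalnode (f : (Fin d → Bool) → Bool) (x : (BTree.node d c).Leaves → Bool) :
    BTree.eval (.node d c) (f, Ls) x = f (Yval c Ls x) := rfl

lemma restrict_update_ne (x : (BTree.node d c).Leaves → Bool) (b : Bool) (j : Fin d)
    (hj : j ≠ i) :
    (fun m => Function.update x ⟨i, ℓ'⟩ b ⟨j, m⟩) = fun m => x ⟨j, m⟩ := by
  funext m
  exact Function.update_of_ne (by intro hh; injection hh with h1 h2; exact hj h1) _ _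

lemma restrict_update_eq (x : (BTree.node d c).Leaves → Bool) (b : Bool) :
    (fun m => Function.update x ⟨i, ℓ'⟩ b ⟨i, m⟩)
      = Function.update (fun m => x ⟨i, m⟩) ℓ' b := by
  funext m
  by_cases hm : m = ℓ'
  · subst hm
    erw [Function.update_self, Function.update_self]
  · erw [Function.update_of_ne hm, Function.update_of_ne (a := (⟨i, m⟩ : (BTree.node d c).Leaves)) (a' := ⟨i, ℓ'⟩)
      (by intro hh; injection hh with h1 h2; exact hm h2)]

lemma Yval_update (x : (BTree.node d c).Leaves → Bool) (b : Bool) :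
    Yval c Ls (Function.update x ⟨i, ℓ'⟩ b)
      = Function.update (Yval c Ls x) i
          ((c i).eval (Ls i) (Function.update (fun m => x ⟨i, m⟩) ℓ' b)) := by
  funext j
  by_cases hj : j = i
  · subst hj
    rw [Function.update_self, Yval, restrict_update_eq]
  · rw [Function.update_of_ne hj, Yval, Yval, restrict_update_ne c i ℓ' x b j hj]

lemma key_event (f : (Fin d → Bool) → Bool) (x : (BTree.node d c).Leaves → Bool) :
    (BTree.eval (.node d c) (f, Ls) x
        ≠ BTree.eval (.node d c) (f, Ls) (Function.update x ⟨i, ℓ'⟩ (!(x ⟨i, ℓ'⟩))))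
      ↔ (((c i).eval (Ls i) (fun m => x ⟨i, m⟩)
            ≠ (c i).eval (Ls i)
              (Function.update (fun m => x ⟨i, m⟩) ℓ' (!(x ⟨i, ℓ'⟩))))
          ∧ f (Yval c Ls x) ≠ f (Function.update (Yval c Ls x) i (!(Yval c Ls x i)))) := by
  rw [evalnode, evalnode, Yval_update]
  set w := Yval c Ls x with hw
  set v := (c i).eval (Ls i)
      (Function.update (fun m => x ⟨i, m⟩) ℓ' (!(x ⟨i, ℓ'⟩))) with hv
  have hwi : w i = (c i).eval (Ls i) (fun m => x ⟨i, m⟩) := rfl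
  rw [← hwi]
  by_cases hvw : w i = v
  · rw [← hvw, Function.update_eq_self]
    simp
  · have hv' : v = !(w i) := by
      cases hb : w i <;> cases hb' : v <;> simp_all
    rw [hv']
    simp [Ne.symm hvw]

end Node

section NodeSum

variable (μ : PMF Bool) {h : ℕ} {d : ℕ} (c : Fin d → BTree h) (Ls : ∀ j, (c j).Labels)
  (i : Fin d) (ℓ' : (c i).Leaves)

lemma node_inner :
    ∑ f : (Fin d → Bool) → Bool, (iidFun μ d f).toReal *
        infl (BTree.eval (.node d c) (f, Ls)) ⟨i, ℓ'⟩
      = (2 * (μ false).toReal * (μ true).toReal) * infl ((c i).eval (Ls i)) ℓ' := by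
  classical
  set q0 := (μ false).toReal
  set q1 := (μ true).toReal
  set N := Fintype.card ((BTree.node d c).Leaves) with hNdef
  -- pivotal indicator for the subtree i
  set piv : ((c i).Leaves → Bool) → ℝ := fun xi =>
    if (c i).eval (Ls i) xi ≠ (c i).eval (Ls i) (Function.update xi ℓ' (!(xi ℓ'))) then 1 else 0
    with hpiv
  have step1 : ∀ f : (Fin d → Bool) → Bool,
      (iidFun μ d f).toReal * infl (BTree.eval (.node d c) (f, Ls)) ⟨i, ℓ'⟩
        = ∑ x : (BTree.node d c).Leaves → Bool,
            (piv (fun m => x ⟨i, m⟩)) *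
            ((iidFun μ d f).toReal *
              (if f (Yval c Ls x) ≠ f (Function.update (Yval c Ls x) i (!(Yval c Ls x i)))
                then (1:ℝ) else 0)) / 2 ^ N := by
    intro f
    erw [infl_eq_sum, ← hNdef, ← mul_div_assoc, Finset.mul_sum, ← Finset.sum_div]
    congr 1
    refine Finset.sum_congr rfl fun x _ => ?_
    rw [hpiv]
    simp only []
    by_cases h1 : (c i).eval (Ls i) (fun m => x ⟨i, m⟩)
        ≠ (c i).eval (Ls i) (Function.update (fun m => x ⟨i, m⟩) ℓ' (!(x ⟨i, ℓ'⟩)))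
    · by_cases h2 : f (Yval c Ls x)
          ≠ f (Function.update (Yval c Ls x) i (!(Yval c Ls x i)))
      · simp [key_event c Ls i ℓ' f x, h1, h2]
      · simp [key_event c Ls i ℓ' f x, h1, h2]
    · simp [key_event c Ls i ℓ' f x, h1]
  rw [Finset.sum_congr rfl fun f _ => step1 f, Finset.sum_comm]
  have step2 : ∀ x : (BTree.node d c).Leaves → Bool,
      ∑ f : (Fin d → Bool) → Bool,
          (piv (fun m => x ⟨i, m⟩)) *
            ((iidFun μ d f).toReal *
              (if f (Yval c Ls x) ≠ f (Function.update (Yval c Ls x) i (!(Yval c Ls x i)))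
                then (1:ℝ) else 0)) / 2 ^ N
        = (piv (fun m => x ⟨i, m⟩)) * (2 * q0 * q1) / 2 ^ N := by
    intro x
    rw [← Finset.sum_div, ← Finset.mul_sum,
      iid_twoPoint μ d _ _ (update_ne_self (Yval c Ls x) i)]
  rw [Finset.sum_congr rfl fun x _ => step2 x]
  -- counting step
  have count1 : ∑ x : (BTree.node d c).Leaves → Bool, piv (fun m => x ⟨i, m⟩)
      = ∑ y : ∀ j : Fin d, (c j).Leaves → Bool, piv (y i) :=
    Fintype.sum_equiv (Equiv.piCurry fun _ (_ : (c _).Leaves) => Bool) _ _ (fun x => rfl)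
  have count2 : ∑ y : ∀ j : Fin d, (c j).Leaves → Bool, piv (y i)
      = (infl ((c i).eval (Ls i)) ℓ' * 2 ^ (Fintype.card ((c i).Leaves)))
        * ∏ j ∈ Finset.univ.erase i, (Fintype.card ((c j).Leaves → Bool) : ℝ) := by
    rw [FUBcount (β := fun j => (c j).Leaves → Bool) i piv]
    congr 1
    rw [infl_eq_sum, div_mul_cancel₀ _ (by positivity : ((2:ℝ) ^ Fintype.card ((c i).Leaves)) ≠ 0)]
  have hcard : ∀ j : Fin d, (Fintype.card ((c j).Leaves → Bool) : ℝ)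
      = 2 ^ Fintype.card ((c j).Leaves) := by
    intro j
    rw [Fintype.card_fun, Fintype.card_bool]
    push_cast
    rfl
  have hN : (2:ℝ) ^ N = 2 ^ (Fintype.card ((c i).Leaves))
      * ∏ j ∈ Finset.univ.erase i, (2:ℝ) ^ (Fintype.card ((c j).Leaves)) := by
    have h1 : N = ∑ j, Fintype.card ((c j).Leaves) := by
      rw [hNdef,
        show Fintype.card ((BTree.node d c).Leaves)
          = Fintype.card (Σ j : Fin d, (c j).Leaves) from Fintype.card_congr (Equiv.cast rfl),
        Fintype.card_sigma]
    rw [h1, ← Finset.prod_pow_eq_pow_sum, ← Finset.mul_prod_erase _ _ (Finset.mem_univ i)]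
  -- assemble
  have hsplit : ∑ x : (BTree.node d c).Leaves → Bool,
      (piv (fun m => x ⟨i, m⟩)) * (2 * q0 * q1) / 2 ^ N
      = (∑ x : (BTree.node d c).Leaves → Bool, piv (fun m => x ⟨i, m⟩))
        * (2 * q0 * q1) / 2 ^ N := by
    rw [← Finset.sum_div, ← Finset.sum_mul]
  rw [hsplit, count1, count2, Finset.prod_congr rfl fun j _ => hcard j, hN]
  have hpos : (0:ℝ) < 2 ^ (Fintype.card ((c i).Leaves)) := by positivity
  have hpos2 : (0:ℝ) < ∏ j ∈ Finset.univ.erase i, (2:ℝ) ^ (Fintype.card ((c j).Leaves)) :=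
    Finset.prod_pos fun j _ => by positivity
  field_simp

end NodeSum

lemma node_case (μ : PMF Bool) {h : ℕ} {d : ℕ} (c : Fin d → BTree h) (i : Fin d)
    (ℓ' : (c i).Leaves)
    (IH : pexp (labelPMF (iidFun μ) (c i)) (fun L => infl ((c i).eval L) ℓ')
      = pathProd (iidFun μ) (c i) ℓ') :
    pexp (labelPMF (iidFun μ) (.node d c))
        (fun L => infl (BTree.eval (.node d c) L) ⟨i, ℓ'⟩)
      = pathProd (iidFun μ) (.node d c) ⟨i, ℓ'⟩ := by
  classical
  have key : pexp (labelPMF (iidFun μ) (.node d c))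
      (fun L => infl (BTree.eval (.node d c) L) ⟨i, ℓ'⟩)
    = (2 * (μ false).toReal * (μ true).toReal)
        * ((∑ b : (c i).Labels,
              (labelPMF (iidFun μ) (c i) b).toReal * infl ((c i).eval b) ℓ')
          * ∏ j ∈ Finset.univ.erase i,
              (∑ b : (c j).Labels, (labelPMF (iidFun μ) (c j) b).toReal)) := by
    calc pexp (labelPMF (iidFun μ) (.node d c)) (fun L => infl (BTree.eval (.node d c) L) ⟨i, ℓ'⟩) = ∑ fL : ((Fin d → Bool) → Bool) × (∀ j, (c j).Labels),
            (labelPMF (iidFun μ) (.node d c) fL).toReal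
              * infl (BTree.eval (.node d c) fL) ⟨i, ℓ'⟩ := tsum_fintype _
      _ = ∑ f : (Fin d → Bool) → Bool, ∑ Ls : ∀ j, (c j).Labels,
            (labelPMF (iidFun μ) (.node d c) (f, Ls)).toReal
              * infl (BTree.eval (.node d c) (f, Ls)) ⟨i, ℓ'⟩ := Fintype.sum_prod_type _
      _ = ∑ Ls : ∀ j, (c j).Labels, ∑ f : (Fin d → Bool) → Bool,
            (∏ j, (labelPMF (iidFun μ) (c j) (Ls j)).toReal)
              * ((iidFun μ d f).toReal * infl (BTree.eval (.node d c) (f, Ls)) ⟨i, ℓ'⟩) := by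
          rw [Finset.sum_comm]
          refine Finset.sum_congr rfl fun Ls _ => Finset.sum_congr rfl fun f _ => ?_
          rw [labelPMF_node_apply, ENNReal.toReal_mul, ENNReal.toReal_prod]
          ring
      _ = ∑ Ls : ∀ j, (c j).Labels,
            (∏ j, (labelPMF (iidFun μ) (c j) (Ls j)).toReal)
              * ((2 * (μ false).toReal * (μ true).toReal)
                  * infl ((c i).eval (Ls i)) ℓ') := by
          refine Finset.sum_congr rfl fun Ls _ => ?_
          rw [← Finset.mul_sum, node_inner μ c Ls i ℓ']
      _ = ∑ Ls : ∀ j, (c j).Labels,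
            (2 * (μ false).toReal * (μ true).toReal)
              * ((∏ j, (labelPMF (iidFun μ) (c j) (Ls j)).toReal)
                  * infl ((c i).eval (Ls i)) ℓ') := by
          refine Finset.sum_congr rfl fun Ls _ => ?_
          ring
      _ = (2 * (μ false).toReal * (μ true).toReal)
            * ∑ Ls : ∀ j, (c j).Labels,
              (∏ j, (labelPMF (iidFun μ) (c j) (Ls j)).toReal)
                * infl ((c i).eval (Ls i)) ℓ' := by
          rw [← Finset.mul_sum]
      _ = _ := by
          rw [FUB (fun j L => (labelPMF (iidFun μ) (c j) L).toReal) i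
            (fun Li => infl ((c i).eval Li) ℓ')]
  rw [key]
  have h1 : ∀ j : Fin d, (∑ b : (c j).Labels, (labelPMF (iidFun μ) (c j) b).toReal) = 1 :=
    fun j => pmf_sum_toReal_eq_one _
  rw [Finset.prod_congr rfl fun j _ => h1 j, Finset.prod_const_one, mul_one]
  have h2 : (∑ b : (c i).Labels,
      (labelPMF (iidFun μ) (c i) b).toReal * infl ((c i).eval b) ℓ')
      = pathProd (iidFun μ) (c i) ℓ' := by
    rw [← IH, pexp_fintype]
  rw [h2]
  have h3 : pathProd (iidFun μ) (.node d c) ⟨i, ℓ'⟩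
      = pexp (iidFun μ d) (fun f => infl f i) * pathProd (iidFun μ) (c i) ℓ' := rfl
  rw [h3, pexp_iid_infl]

lemma leaf_case (μ : PMF Bool) (ℓ : BTree.leaf.Leaves) :
    pexp (labelPMF (iidFun μ) .leaf) (fun L => infl (BTree.eval .leaf L) ℓ)
      = pathProd (iidFun μ) .leaf ℓ := by
  have hℓ : ℓ = () := rfl
  have step : ∀ L : BTree.Labels .leaf, infl (BTree.eval .leaf L) ℓ = 1 := by
    intro L
    rw [infl_eq_sum]
    have hc : Fintype.card (BTree.Leaves .leaf) = 1 := rfl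
    have hsum : ∀ x : BTree.Leaves .leaf → Bool,
        (if BTree.eval .leaf L x
            ≠ BTree.eval .leaf L (Function.update x ℓ (!(x ℓ))) then (1:ℝ) else 0) = 1 := by
      intro x
      rw [if_pos]
      show x () ≠ (Function.update x ℓ (!(x ℓ))) ()
      erw [hℓ, Function.update_self]
      exact Bool.self_ne_not (x ())
    rw [hc, Finset.sum_congr rfl fun x _ => hsum x, Finset.sum_const, Finset.card_univ]
    have hc2 : Fintype.card (BTree.Leaves .leaf → Bool) = 2 := by
      rw [Fintype.card_fun, Fintype.card_bool, hc, pow_one]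
    rw [hc2]
    norm_num
  rw [pexp_fintype, Finset.sum_congr rfl fun L _ => by rw [step L, mul_one],
    pmf_sum_toReal_eq_one]
  rfl

/-- For a tree of depth `h` whose transfer functions are drawn independently from a
fully independent family (all truth-table entries i.i.d. with distribution `μ`), the
expected influence of a leaf `ℓ` on the root function equals the product, along the
path from `ℓ` to the root, of the expected influences of the corresponding inputs. -/
theorem stmt12 (μ : PMF Bool) {h : ℕ} (t : BTree h) (ℓ : t.Leaves) :
    pexp (labelPMF (iidFun μ) t) (fun L => infl (t.eval L) ℓ)
      = pathProd (iidFun μ) t ℓ := by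
  revert ℓ
  induction t with
  | leaf => intro ℓ; exact leaf_case μ ℓ
  | node d c ih => intro ℓ; exact node_case μ c ℓ.1 ℓ.2 (ih ℓ.1 ℓ.2)
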